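/- Under the stated assumptions, limsup_{N→∞} ∫_{1/2+√ε}^{3/2+ε} (1/N)·#{n ≤ N : g_n ∈ (x, 3/2+ε)} dx ≤ ∫_{1/2+√ε}^{3/2+ε} (3/2 + ε − x) dx. -/

import Mathlib

open Finset Filter MeasureTheory
open scoped ENNReal

set_option maxHeartbeats 1000000 in
open scoped Classical in
/-- Let `(λ_n)` be strictly increasing with average gap `1` and Poisson pair correlations,
let `ε = 10⁻⁹`, and suppose `g n := λ_{n+1} − λ_n ≤ 3/2 + ε` for all `n ≥ 1`. Then
`limsup_{N→∞} ∫_{1/2+√ε}^{3/2+ε} (1/N)·#{n ≤ N : g n ∈ (x, 3/2+ε)} dx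
  ≤ ∫_{1/2+√ε}^{3/2+ε} (3/2 + ε − x) dx`. -/
theorem stmt_15 (lam : ℕ → ℝ) (g : ℕ → ℝ) (hgdef : ∀ n, g n = lam (n + 1) - lam n)
    (hmono : ∀ n, 1 ≤ n → lam n < lam (n + 1))
    (havg : Tendsto (fun N : ℕ => (∑ n ∈ Finset.Icc 1 N, g n) / N) atTop (nhds 1))
    (hppc : ∀ I : Set ℝ, I.OrdConnected → Bornology.IsBounded I →
      Tendsto (fun N : ℕ =>
          (((Finset.Icc 1 N ×ˢ Finset.Icc 1 N).filter
            (fun p => p.1 ≠ p.2 ∧ lam p.2 - lam p.1 ∈ I)).card : ℝ) / N)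
        atTop (nhds (MeasureTheory.volume I).toReal))
    (ε : ℝ) (hε : ε = 1 / 10 ^ 9)
    (hgap : ∀ n, 1 ≤ n → g n ≤ 3 / 2 + ε) :
    Filter.limsup (fun N : ℕ =>
        ∫ x in (1 / 2 + Real.sqrt ε)..(3 / 2 + ε),
          (((Finset.Icc 1 N).filter
            (fun n => g n ∈ Set.Ioo x (3 / 2 + ε))).card : ℝ) / N) atTop
      ≤ ∫ x in (1 / 2 + Real.sqrt ε)..(3 / 2 + ε), (3 / 2 + ε - x) := by
  have hε0 : (0:ℝ) < ε := by rw [hε]; norm_num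
  have hε1 : ε < 1 := by rw [hε]; norm_num
  set a : ℝ := 1 / 2 + Real.sqrt ε with ha
  set L : ℝ := 3 / 2 + ε with hL
  have hs1 : Real.sqrt ε < 1 := by
    rw [show (1:ℝ) = Real.sqrt 1 by simp]
    exact Real.sqrt_lt_sqrt hε0.le hε1
  have haL : a < L := by
    have : (0:ℝ) < ε := hε0
    simp only [ha, hL]; linarith
  set F : ℕ → ℝ → ℝ := fun N x =>
    (((Finset.Icc 1 N).filter (fun n => g n ∈ Set.Ioo x L)).card : ℝ) / N with hF
  -- antitonicity and measurability in x
  have hanti : ∀ N, Antitone (F N) := by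
    intro N x y hxy
    have hsub : (Finset.Icc 1 N).filter (fun n => g n ∈ Set.Ioo y L) ⊆
        (Finset.Icc 1 N).filter (fun n => g n ∈ Set.Ioo x L) := by
      apply Finset.monotone_filter_right
      intro n h
      exact fun h' => ⟨lt_of_le_of_lt hxy h'.1, h'.2⟩
    have hcc := Finset.card_le_card hsub
    simp only [hF]
    gcongr <;> exact_mod_cast hcc
  have hmeas : ∀ N, Measurable (F N) := fun N => (hanti N).measurable
  have hFnonneg : ∀ N x, 0 ≤ F N x := fun N x =>
    div_nonneg (Nat.cast_nonneg _) (Nat.cast_nonneg _)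
  have hFle1 : ∀ N x, F N x ≤ 1 := by
    intro N x
    rcases Nat.eq_zero_or_pos N with h0 | hpos
    · simp [hF, h0]
    · have hc : (((Finset.Icc 1 N).filter (fun n => g n ∈ Set.Ioo x L)).card : ℝ) ≤ N := by
        have := Finset.card_le_card (Finset.filter_subset (fun n => g n ∈ Set.Ioo x L) (Finset.Icc 1 N))
        have h2 : (Finset.Icc 1 N).card = N := by simp
        exact_mod_cast this.trans_eq h2
      rw [hF, div_le_one (by exact_mod_cast hpos)]
      exact hc
  -- pointwise limsup bound
  have key : ∀ x, x ≤ L →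
      limsup (fun N => ENNReal.ofReal (F N x)) atTop ≤ ENNReal.ofReal (L - x) := by
    intro x hxL
    rcases eq_or_lt_of_le hxL with hx | hx
    · have hFx : ∀ N, F N x = 0 := by
        intro N
        have hemp : (Finset.Icc 1 N).filter (fun n => g n ∈ Set.Ioo x L) = ∅ := by
          apply Finset.filter_false_of_mem
          intro n _
          rintro ⟨h1, h2⟩
          rw [hx] at h1
          exact absurd (h1.trans h2) (lt_irrefl L)
        simp only [hF]
        rw [hemp]
        simp
      simp only [hFx, ENNReal.ofReal_zero, limsup_const]
      exact zero_le
    · have hppc' := hppc (Set.Ioo x L) Set.ordConnected_Ioo (Metric.isBounded_Ioo x L)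
      rw [Real.volume_Ioo, ENNReal.toReal_ofReal (by linarith)] at hppc'
      replace hppc' : Tendsto (fun N : ℕ =>
          ((((Finset.Icc 1 N ×ˢ Finset.Icc 1 N).filter
            (fun p => p.1 ≠ p.2 ∧ lam p.2 - lam p.1 ∈ Set.Ioo x L)).card : ℝ) / N))
          atTop (nhds (L - x)) := by
        apply hppc'.congr
        intro N
        congr 1
        norm_cast
      set P : ℕ → ℝ := fun M =>
        (((Finset.Icc 1 M ×ˢ Finset.Icc 1 M).filter
          (fun p => p.1 ≠ p.2 ∧ lam p.2 - lam p.1 ∈ Set.Ioo x L)).card : ℝ) / M with hP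
      set u : ℕ → ℝ := fun N => P (N + 1) * ((N + 1 : ℝ) / N) with hu
      -- counting inequality
      have hcount : ∀ N : ℕ,
          ((Finset.Icc 1 N).filter (fun n => g n ∈ Set.Ioo x L)).card ≤
          ((Finset.Icc 1 (N+1) ×ˢ Finset.Icc 1 (N+1)).filter
            (fun p => p.1 ≠ p.2 ∧ lam p.2 - lam p.1 ∈ Set.Ioo x L)).card := by
        intro N
        apply Finset.card_le_card_of_injOn (fun n => (n, n + 1))
        · intro n hn
          simp only [Finset.mem_coe, Finset.mem_filter, Finset.mem_Icc, Finset.mem_product] at hn ⊢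
          refine ⟨⟨⟨hn.1.1, hn.1.2.trans (Nat.le_succ N)⟩,
            ⟨le_trans hn.1.1 (Nat.le_succ n), Nat.succ_le_succ hn.1.2⟩⟩,
            (Nat.lt_succ_self n).ne, ?_⟩
          rw [← hgdef n]; exact hn.2
        · intro m _ n _ h
          exact (Prod.mk.injEq _ _ _ _).mp h |>.1
      have hFu : ∀ N, F N x ≤ u N := by
        intro N
        rcases Nat.eq_zero_or_pos N with h0 | hpos
        · simp [hF, hu, h0]
        · have hN : (0:ℝ) < N := by exact_mod_cast hpos
          have hN1 : (0:ℝ) < (N:ℝ) + 1 := by linarith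
          have h1 : F N x ≤
              (((Finset.Icc 1 (N+1) ×ˢ Finset.Icc 1 (N+1)).filter
                (fun p => p.1 ≠ p.2 ∧ lam p.2 - lam p.1 ∈ Set.Ioo x L)).card : ℝ) / N := by
            have hcc := hcount N
            simp only [hF]
            gcongr <;> exact_mod_cast hcc
          refine h1.trans_eq ?_
          have hc : ∀ c : ℝ, c / ((N:ℝ) + 1) * (((N:ℝ) + 1) / (N:ℝ)) = c / N := by
            intro c; field_simp
          simp only [hu, hP]
          push_cast
          exact (hc _).symm
      have hulim : Tendsto u atTop (nhds (L - x)) := by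
        have h1 : Tendsto (fun N : ℕ => P (N + 1)) atTop (nhds (L - x)) := by
          simp only [hP]
          exact (tendsto_add_atTop_iff_nat 1).mpr hppc'
        have h2 : Tendsto (fun N : ℕ => ((N:ℝ) + 1) / N) atTop (nhds 1) := by
          have h3 : Tendsto (fun N : ℕ => 1 + 1 / (N:ℝ)) atTop (nhds (1 + 0)) :=
            tendsto_const_nhds.add tendsto_one_div_atTop_nhds_zero_nat
          rw [add_zero] at h3
          apply h3.congr'
          filter_upwards [eventually_ge_atTop 1] with N hN
          have : (0:ℝ) < N := by exact_mod_cast hN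
          field_simp
        have := h1.mul h2
        rwa [mul_one] at this
      calc limsup (fun N => ENNReal.ofReal (F N x)) atTop
          ≤ limsup (fun N => ENNReal.ofReal (u N)) atTop :=
            limsup_le_limsup
              (Eventually.of_forall fun N => ENNReal.ofReal_le_ofReal (hFu N))
        _ = ENNReal.ofReal (L - x) :=
            ((ENNReal.continuous_ofReal.tendsto _).comp hulim).limsup_eq
  -- integral identities
  set μ : Measure ℝ := volume.restrict (Set.Ioc a L) with hμ
  set J : ℕ → ℝ≥0∞ := fun N => ∫⁻ x, ENNReal.ofReal (F N x) ∂μ with hJ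
  have hInt_eq : ∀ N : ℕ, (∫ x in a..L, F N x) = (J N).toReal := by
    intro N
    rw [intervalIntegral.integral_of_le haL.le]
    rw [MeasureTheory.integral_eq_lintegral_of_nonneg_ae
      (ae_of_all _ fun x => hFnonneg N x) (hmeas N).aestronglyMeasurable]
  set T : ℝ≥0∞ := ∫⁻ x, ENNReal.ofReal (L - x) ∂μ with hT
  have hTfin : T ≠ ⊤ := by
    have h1 : T ≤ ∫⁻ x, ENNReal.ofReal (L - a) ∂μ := by
      rw [hT, hμ]
      apply setLIntegral_mono measurable_const
      intro x hx
      exact ENNReal.ofReal_le_ofReal (by linarith [hx.1])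
    have h2 : (∫⁻ x, ENNReal.ofReal (L - a) ∂μ) = ENNReal.ofReal (L - a) * volume (Set.Ioc a L) := by
      rw [hμ, setLIntegral_const]
    rw [h2] at h1
    exact ne_top_of_le_ne_top (ENNReal.mul_ne_top ENNReal.ofReal_ne_top
      (by rw [Real.volume_Ioc]; exact ENNReal.ofReal_ne_top)) h1
  have hJT : limsup J atTop ≤ T := by
    calc limsup J atTop
        ≤ ∫⁻ x, limsup (fun N => ENNReal.ofReal (F N x)) atTop ∂μ := by
          apply limsup_lintegral_le (fun _ => (1 : ℝ≥0∞))
          · exact fun N => (ENNReal.measurable_ofReal.comp (hmeas N))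
          · intro N
            exact ae_of_all _ fun x => ENNReal.ofReal_le_one.mpr (hFle1 N x)
          · rw [lintegral_one, hμ, Measure.restrict_apply_univ, Real.volume_Ioc]
            exact ENNReal.ofReal_ne_top
      _ ≤ T := by
          rw [hT, hμ]
          apply lintegral_mono_ae
          rw [ae_restrict_iff' measurableSet_Ioc]
          exact ae_of_all _ fun x hx => key x hx.2
  have hReq : (∫ x in a..L, (L - x)) = T.toReal := by
    have hnn : (0:ℝ→ℝ) ≤ᵐ[volume.restrict (Set.Ioc a L)] fun x => L - x := by
      filter_upwards [ae_restrict_mem measurableSet_Ioc] with x hx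
      simp only [Pi.zero_apply]
      linarith [hx.2]
    rw [intervalIntegral.integral_of_le haL.le,
      MeasureTheory.integral_eq_lintegral_of_nonneg_ae hnn
        (continuous_const.sub continuous_id).aestronglyMeasurable]
  -- conclude
  have hgoal : limsup (fun N : ℕ => (J N).toReal) atTop ≤ T.toReal := by
    by_contra hcon
    push_neg at hcon
    set δ := (limsup (fun N : ℕ => (J N).toReal) atTop - T.toReal) / 2 with hδ
    have hδ0 : 0 < δ := by simp only [hδ]; linarith
    have h1 : limsup J atTop < T + ENNReal.ofReal δ :=
      lt_of_le_of_lt hJT (ENNReal.lt_add_right hTfin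
        (by simp [ENNReal.ofReal_eq_zero]; linarith))
    have h2 := eventually_lt_of_limsup_lt h1
    have h3 : ∀ᶠ N in atTop, (J N).toReal ≤ T.toReal + δ := by
      filter_upwards [h2] with N hN
      have hfin : T + ENNReal.ofReal δ ≠ ⊤ := by
        exact ENNReal.add_ne_top.mpr ⟨hTfin, ENNReal.ofReal_ne_top⟩
      have := ENNReal.toReal_mono hfin hN.le
      rwa [ENNReal.toReal_add hTfin ENNReal.ofReal_ne_top,
        ENNReal.toReal_ofReal hδ0.le] at this
    have h4 : limsup (fun N : ℕ => (J N).toReal) atTop ≤ T.toReal + δ := by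
      apply limsup_le_of_le _ h3
      exact isCoboundedUnder_le_of_le atTop (f := fun N : ℕ => (J N).toReal) (x := 0)
        fun N => ENNReal.toReal_nonneg
    simp only [hδ] at h4
    linarith
  calc limsup (fun N : ℕ => ∫ x in a..L, F N x) atTop
      = limsup (fun N : ℕ => (J N).toReal) atTop := by
        congr 1; funext N; exact hInt_eq N
    _ ≤ T.toReal := hgoal
    _ = ∫ x in a..L, (L - x) := hReq.symm
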